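/- In the symmetric group on 7 letters {0, 1, ..., 6}, the subgroup generated by the six 3-cycles r_i = (0 i i+1) for i = 1, ..., 5 together with r_6 = (0 6 1) is exactly the alternating group on 7 letters. (This is the claim of the 'puzzle hexagonal': rotating triples of hexagonal pieces around each of the six vertices of the central hexagon reaches exactly half of all configurations of the 7 pieces.) -/

import Mathlib

open Equiv Equiv.Perm Subgroup

namespace Stmt4Aux

def S : Set (Equiv.Perm (Fin 7)) :=
  {c[(0 : Fin 7), 1, 2], c[(0 : Fin 7), 2, 3], c[(0 : Fin 7), 3, 4],
    c[(0 : Fin 7), 4, 5], c[(0 : Fin 7), 5, 6], c[(0 : Fin 7), 6, 1]}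

def gen : Fin 6 → Equiv.Perm (Fin 7) :=
  ![c[(0 : Fin 7), 1, 2], c[(0 : Fin 7), 2, 3], c[(0 : Fin 7), 3, 4],
    c[(0 : Fin 7), 4, 5], c[(0 : Fin 7), 5, 6], c[(0 : Fin 7), 6, 1]]

def word : Fin 7 → Fin 7 → Fin 7 → List (Fin 6)
  | 0, 0, 0 => []
  | 0, 0, 1 => []
  | 0, 0, 2 => []
  | 0, 0, 3 => []
  | 0, 0, 4 => []
  | 0, 0, 5 => []
  | 0, 0, 6 => []
  | 0, 1, 0 => []
  | 0, 1, 1 => []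
  | 0, 1, 2 => [0, 0]
  | 0, 1, 3 => [0, 1, 0, 0]
  | 0, 1, 4 => [5, 4, 3]
  | 0, 1, 5 => [5, 4]
  | 0, 1, 6 => [5]
  | 0, 2, 0 => []
  | 0, 2, 1 => [0]
  | 0, 2, 2 => []
  | 0, 2, 3 => [1, 1]
  | 0, 2, 4 => [1, 2, 1, 1]
  | 0, 2, 5 => [0, 5, 4]
  | 0, 2, 6 => [0, 5]
  | 0, 3, 0 => []
  | 0, 3, 1 => [1, 0]
  | 0, 3, 2 => [1]
  | 0, 3, 3 => []
  | 0, 3, 4 => [2, 2]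
  | 0, 3, 5 => [2, 3, 2, 2]
  | 0, 3, 6 => [1, 0, 5]
  | 0, 4, 0 => []
  | 0, 4, 1 => [2, 1, 0]
  | 0, 4, 2 => [2, 1]
  | 0, 4, 3 => [2]
  | 0, 4, 4 => []
  | 0, 4, 5 => [3, 3]
  | 0, 4, 6 => [3, 4, 3, 3]
  | 0, 5, 0 => []
  | 0, 5, 1 => [3, 2, 1, 0]
  | 0, 5, 2 => [3, 2, 1]
  | 0, 5, 3 => [3, 2]
  | 0, 5, 4 => [3]
  | 0, 5, 5 => []
  | 0, 5, 6 => [4, 4]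
  | 0, 6, 0 => []
  | 0, 6, 1 => [5, 5]
  | 0, 6, 2 => [5, 5, 0, 0]
  | 0, 6, 3 => [4, 3, 2]
  | 0, 6, 4 => [4, 3]
  | 0, 6, 5 => [4]
  | 0, 6, 6 => []
  | 1, 0, 0 => []
  | 1, 0, 1 => []
  | 1, 0, 2 => [0]
  | 1, 0, 3 => [1, 0]
  | 1, 0, 4 => [2, 1, 0]
  | 1, 0, 5 => [3, 2, 1, 0]
  | 1, 0, 6 => [5, 5]
  | 1, 1, 0 => []
  | 1, 1, 1 => []
  | 1, 1, 2 => []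
  | 1, 1, 3 => []
  | 1, 1, 4 => []
  | 1, 1, 5 => []
  | 1, 1, 6 => []
  | 1, 2, 0 => [0, 0]
  | 1, 2, 1 => []
  | 1, 2, 2 => []
  | 1, 2, 3 => [1, 1, 0, 0]
  | 1, 2, 4 => [0, 0, 2, 1, 0]
  | 1, 2, 5 => [0, 5, 4, 0, 0]
  | 1, 2, 6 => [0, 5, 0, 0]
  | 1, 3, 0 => [0, 1, 0, 0]
  | 1, 3, 1 => []
  | 1, 3, 2 => [0, 1]
  | 1, 3, 3 => []
  | 1, 3, 4 => [0, 2, 2, 0, 0]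
  | 1, 3, 5 => [2, 3, 0, 2, 2, 0, 0]
  | 1, 3, 6 => [1, 1, 5, 5, 1]
  | 1, 4, 0 => [5, 4, 3]
  | 1, 4, 1 => []
  | 1, 4, 2 => [0, 2, 1]
  | 1, 4, 3 => [1, 0, 2]
  | 1, 4, 4 => []
  | 1, 4, 5 => [0, 3, 3, 0, 0]
  | 1, 4, 6 => [2, 2, 5, 5, 2]
  | 1, 5, 0 => [5, 4]
  | 1, 5, 1 => []
  | 1, 5, 2 => [5, 4, 0]
  | 1, 5, 3 => [5, 4, 1, 0]
  | 1, 5, 4 => [3, 5, 4]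
  | 1, 5, 5 => []
  | 1, 5, 6 => [5, 5, 4, 4]
  | 1, 6, 0 => [5]
  | 1, 6, 1 => []
  | 1, 6, 2 => [5, 0]
  | 1, 6, 3 => [5, 1, 0]
  | 1, 6, 4 => [4, 3, 5]
  | 1, 6, 5 => [4, 5]
  | 1, 6, 6 => []
  | 2, 0, 0 => []
  | 2, 0, 1 => [0, 0]
  | 2, 0, 2 => []
  | 2, 0, 3 => [1]
  | 2, 0, 4 => [2, 1]
  | 2, 0, 5 => [3, 2, 1]
  | 2, 0, 6 => [5, 5, 0, 0]
  | 2, 1, 0 => [0]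
  | 2, 1, 1 => []
  | 2, 1, 2 => []
  | 2, 1, 3 => [0, 1]
  | 2, 1, 4 => [0, 2, 1]
  | 2, 1, 5 => [5, 4, 0]
  | 2, 1, 6 => [5, 0]
  | 2, 2, 0 => []
  | 2, 2, 1 => []
  | 2, 2, 2 => []
  | 2, 2, 3 => []
  | 2, 2, 4 => []
  | 2, 2, 5 => []
  | 2, 2, 6 => []
  | 2, 3, 0 => [1, 1]
  | 2, 3, 1 => [1, 1, 0, 0]
  | 2, 3, 2 => []
  | 2, 3, 3 => []
  | 2, 3, 4 => [2, 2, 1, 1]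
  | 2, 3, 5 => [1, 1, 3, 2, 1]
  | 2, 3, 6 => [1, 0, 5, 1, 1]
  | 2, 4, 0 => [1, 2, 1, 1]
  | 2, 4, 1 => [0, 0, 2, 1, 0]
  | 2, 4, 2 => []
  | 2, 4, 3 => [1, 2]
  | 2, 4, 4 => []
  | 2, 4, 5 => [0, 0, 3, 3, 0]
  | 2, 4, 6 => [3, 4, 0, 0, 3, 3, 0]
  | 2, 5, 0 => [0, 5, 4]
  | 2, 5, 1 => [0, 5, 4, 0, 0]
  | 2, 5, 2 => []
  | 2, 5, 3 => [1, 3, 2]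
  | 2, 5, 4 => [2, 1, 3]
  | 2, 5, 5 => []
  | 2, 5, 6 => [0, 0, 4, 4, 0]
  | 2, 6, 0 => [0, 5]
  | 2, 6, 1 => [0, 5, 0, 0]
  | 2, 6, 2 => []
  | 2, 6, 3 => [0, 5, 1]
  | 2, 6, 4 => [0, 5, 2, 1]
  | 2, 6, 5 => [4, 0, 5]
  | 2, 6, 6 => []
  | 3, 0, 0 => []
  | 3, 0, 1 => [0, 1, 0, 0]
  | 3, 0, 2 => [1, 1]
  | 3, 0, 3 => []
  | 3, 0, 4 => [2]
  | 3, 0, 5 => [3, 2]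
  | 3, 0, 6 => [4, 3, 2]
  | 3, 1, 0 => [1, 0]
  | 3, 1, 1 => []
  | 3, 1, 2 => [1, 1, 0, 0]
  | 3, 1, 3 => []
  | 3, 1, 4 => [1, 0, 2]
  | 3, 1, 5 => [5, 4, 1, 0]
  | 3, 1, 6 => [5, 1, 0]
  | 3, 2, 0 => [1]
  | 3, 2, 1 => [0, 1]
  | 3, 2, 2 => []
  | 3, 2, 3 => []
  | 3, 2, 4 => [1, 2]
  | 3, 2, 5 => [1, 3, 2]
  | 3, 2, 6 => [0, 5, 1]
  | 3, 3, 0 => []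
  | 3, 3, 1 => []
  | 3, 3, 2 => []
  | 3, 3, 3 => []
  | 3, 3, 4 => []
  | 3, 3, 5 => []
  | 3, 3, 6 => []
  | 3, 4, 0 => [2, 2]
  | 3, 4, 1 => [0, 2, 2, 0, 0]
  | 3, 4, 2 => [2, 2, 1, 1]
  | 3, 4, 3 => []
  | 3, 4, 4 => []
  | 3, 4, 5 => [3, 3, 2, 2]
  | 3, 4, 6 => [2, 2, 4, 3, 2]
  | 3, 5, 0 => [2, 3, 2, 2]
  | 3, 5, 1 => [2, 3, 0, 2, 2, 0, 0]
  | 3, 5, 2 => [1, 1, 3, 2, 1]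
  | 3, 5, 3 => []
  | 3, 5, 4 => [2, 3]
  | 3, 5, 5 => []
  | 3, 5, 6 => [1, 1, 4, 4, 1]
  | 3, 6, 0 => [1, 0, 5]
  | 3, 6, 1 => [1, 1, 5, 5, 1]
  | 3, 6, 2 => [1, 0, 5, 1, 1]
  | 3, 6, 3 => []
  | 3, 6, 4 => [2, 4, 3]
  | 3, 6, 5 => [3, 2, 4]
  | 3, 6, 6 => []
  | 4, 0, 0 => []
  | 4, 0, 1 => [5, 4, 3]
  | 4, 0, 2 => [1, 2, 1, 1]
  | 4, 0, 3 => [2, 2]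
  | 4, 0, 4 => []
  | 4, 0, 5 => [3]
  | 4, 0, 6 => [4, 3]
  | 4, 1, 0 => [2, 1, 0]
  | 4, 1, 1 => []
  | 4, 1, 2 => [0, 0, 2, 1, 0]
  | 4, 1, 3 => [0, 2, 2, 0, 0]
  | 4, 1, 4 => []
  | 4, 1, 5 => [3, 5, 4]
  | 4, 1, 6 => [4, 3, 5]
  | 4, 2, 0 => [2, 1]
  | 4, 2, 1 => [0, 2, 1]
  | 4, 2, 2 => []
  | 4, 2, 3 => [2, 2, 1, 1]
  | 4, 2, 4 => []
  | 4, 2, 5 => [2, 1, 3]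
  | 4, 2, 6 => [0, 5, 2, 1]
  | 4, 3, 0 => [2]
  | 4, 3, 1 => [1, 0, 2]
  | 4, 3, 2 => [1, 2]
  | 4, 3, 3 => []
  | 4, 3, 4 => []
  | 4, 3, 5 => [2, 3]
  | 4, 3, 6 => [2, 4, 3]
  | 4, 4, 0 => []
  | 4, 4, 1 => []
  | 4, 4, 2 => []
  | 4, 4, 3 => []
  | 4, 4, 4 => []
  | 4, 4, 5 => []
  | 4, 4, 6 => []
  | 4, 5, 0 => [3, 3]
  | 4, 5, 1 => [0, 3, 3, 0, 0]
  | 4, 5, 2 => [0, 0, 3, 3, 0]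
  | 4, 5, 3 => [3, 3, 2, 2]
  | 4, 5, 4 => []
  | 4, 5, 5 => []
  | 4, 5, 6 => [4, 4, 3, 3]
  | 4, 6, 0 => [3, 4, 3, 3]
  | 4, 6, 1 => [2, 2, 5, 5, 2]
  | 4, 6, 2 => [3, 4, 0, 0, 3, 3, 0]
  | 4, 6, 3 => [2, 2, 4, 3, 2]
  | 4, 6, 4 => []
  | 4, 6, 5 => [3, 4]
  | 4, 6, 6 => []
  | 5, 0, 0 => []
  | 5, 0, 1 => [5, 4]
  | 5, 0, 2 => [0, 5, 4]
  | 5, 0, 3 => [2, 3, 2, 2]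
  | 5, 0, 4 => [3, 3]
  | 5, 0, 5 => []
  | 5, 0, 6 => [4]
  | 5, 1, 0 => [3, 2, 1, 0]
  | 5, 1, 1 => []
  | 5, 1, 2 => [0, 5, 4, 0, 0]
  | 5, 1, 3 => [2, 3, 0, 2, 2, 0, 0]
  | 5, 1, 4 => [0, 3, 3, 0, 0]
  | 5, 1, 5 => []
  | 5, 1, 6 => [4, 5]
  | 5, 2, 0 => [3, 2, 1]
  | 5, 2, 1 => [5, 4, 0]
  | 5, 2, 2 => []
  | 5, 2, 3 => [1, 1, 3, 2, 1]
  | 5, 2, 4 => [0, 0, 3, 3, 0]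
  | 5, 2, 5 => []
  | 5, 2, 6 => [4, 0, 5]
  | 5, 3, 0 => [3, 2]
  | 5, 3, 1 => [5, 4, 1, 0]
  | 5, 3, 2 => [1, 3, 2]
  | 5, 3, 3 => []
  | 5, 3, 4 => [3, 3, 2, 2]
  | 5, 3, 5 => []
  | 5, 3, 6 => [3, 2, 4]
  | 5, 4, 0 => [3]
  | 5, 4, 1 => [3, 5, 4]
  | 5, 4, 2 => [2, 1, 3]
  | 5, 4, 3 => [2, 3]
  | 5, 4, 4 => []
  | 5, 4, 5 => []
  | 5, 4, 6 => [3, 4]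
  | 5, 5, 0 => []
  | 5, 5, 1 => []
  | 5, 5, 2 => []
  | 5, 5, 3 => []
  | 5, 5, 4 => []
  | 5, 5, 5 => []
  | 5, 5, 6 => []
  | 5, 6, 0 => [4, 4]
  | 5, 6, 1 => [5, 5, 4, 4]
  | 5, 6, 2 => [0, 0, 4, 4, 0]
  | 5, 6, 3 => [1, 1, 4, 4, 1]
  | 5, 6, 4 => [4, 4, 3, 3]
  | 5, 6, 5 => []
  | 5, 6, 6 => []
  | 6, 0, 0 => []
  | 6, 0, 1 => [5]
  | 6, 0, 2 => [0, 5]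
  | 6, 0, 3 => [1, 0, 5]
  | 6, 0, 4 => [3, 4, 3, 3]
  | 6, 0, 5 => [4, 4]
  | 6, 0, 6 => []
  | 6, 1, 0 => [5, 5]
  | 6, 1, 1 => []
  | 6, 1, 2 => [0, 5, 0, 0]
  | 6, 1, 3 => [1, 1, 5, 5, 1]
  | 6, 1, 4 => [2, 2, 5, 5, 2]
  | 6, 1, 5 => [5, 5, 4, 4]
  | 6, 1, 6 => []
  | 6, 2, 0 => [5, 5, 0, 0]
  | 6, 2, 1 => [5, 0]
  | 6, 2, 2 => []
  | 6, 2, 3 => [1, 0, 5, 1, 1]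
  | 6, 2, 4 => [3, 4, 0, 0, 3, 3, 0]
  | 6, 2, 5 => [0, 0, 4, 4, 0]
  | 6, 2, 6 => []
  | 6, 3, 0 => [4, 3, 2]
  | 6, 3, 1 => [5, 1, 0]
  | 6, 3, 2 => [0, 5, 1]
  | 6, 3, 3 => []
  | 6, 3, 4 => [2, 2, 4, 3, 2]
  | 6, 3, 5 => [1, 1, 4, 4, 1]
  | 6, 3, 6 => []
  | 6, 4, 0 => [4, 3]
  | 6, 4, 1 => [4, 3, 5]
  | 6, 4, 2 => [0, 5, 2, 1]
  | 6, 4, 3 => [2, 4, 3]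
  | 6, 4, 4 => []
  | 6, 4, 5 => [4, 4, 3, 3]
  | 6, 4, 6 => []
  | 6, 5, 0 => [4]
  | 6, 5, 1 => [4, 5]
  | 6, 5, 2 => [4, 0, 5]
  | 6, 5, 3 => [3, 2, 4]
  | 6, 5, 4 => [3, 4]
  | 6, 5, 5 => []
  | 6, 5, 6 => []
  | 6, 6, 0 => []
  | 6, 6, 1 => []
  | 6, 6, 2 => []
  | 6, 6, 3 => []
  | 6, 6, 4 => []
  | 6, 6, 5 => []
  | 6, 6, 6 => []

lemma gen_mem (i : Fin 6) : gen i ∈ closure S := by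
  apply Subgroup.subset_closure
  fin_cases i <;> simp only [S, Set.mem_insert_iff, Set.mem_singleton_iff] <;> decide

lemma word_spec : ∀ a b c : Fin 7, a ≠ b → a ≠ c → b ≠ c →
    Equiv.swap a b * Equiv.swap a c = ((word a b c).map gen).prod := by decide

lemma swap_mul_swap_same_mem {a b c : Fin 7} (ab : a ≠ b) (ac : a ≠ c) :
    Equiv.swap a b * Equiv.swap a c ∈ closure S := by
  by_cases bc : b = c
  · subst bc
    simp [one_mem]
  · rw [word_spec a b c ab ac bc]
    exact list_prod_mem (fun x hx => by
      obtain ⟨i, _, rfl⟩ := List.mem_map.1 hx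
      exact gen_mem i)

lemma swap_pair_mem {σ τ : Equiv.Perm (Fin 7)} (hσ : σ.IsSwap) (hτ : τ.IsSwap) :
    σ * τ ∈ closure S := by
  obtain ⟨a, b, ab, rfl⟩ := hσ
  obtain ⟨c, d, cd, rfl⟩ := hτ
  by_cases ac : a = c
  · subst ac
    exact swap_mul_swap_same_mem ab cd
  have h' : Equiv.swap a b * Equiv.swap c d =
      Equiv.swap a b * Equiv.swap a c * (Equiv.swap c a * Equiv.swap c d) := by
    simp [Equiv.swap_comm c a, mul_assoc]
  rw [h']
  exact mul_mem (swap_mul_swap_same_mem ab ac)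
    (swap_mul_swap_same_mem (Ne.symm ac) cd)

end Stmt4Aux

open Stmt4Aux Equiv Equiv.Perm Subgroup

theorem stmt_4 :
    Subgroup.closure
      ({c[(0 : Fin 7), 1, 2], c[(0 : Fin 7), 2, 3], c[(0 : Fin 7), 3, 4],
        c[(0 : Fin 7), 4, 5], c[(0 : Fin 7), 5, 6], c[(0 : Fin 7), 6, 1]} :
        Set (Equiv.Perm (Fin 7))) = alternatingGroup (Fin 7) := by
  have hS : (Subgroup.closure S : Subgroup (Equiv.Perm (Fin 7))) = alternatingGroup (Fin 7) := by
    refine closure_eq_of_le _ (fun σ hσ => mem_alternatingGroup.2 ?_) (fun σ hσ => ?_)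
    · have h3 : σ.IsThreeCycle := by
        rw [← card_support_eq_three_iff]
        simp only [S, Set.mem_insert_iff, Set.mem_singleton_iff] at hσ
        rcases hσ with h | h | h | h | h | h <;> subst h <;> decide
      exact h3.sign
    · suffices hind :
        ∀ (n : ℕ) (l : List (Equiv.Perm (Fin 7))) (_ : ∀ g, g ∈ l → IsSwap g)
          (_ : l.length = 2 * n), l.prod ∈ closure S by
        obtain ⟨l, rfl, hl⟩ := truncSwapFactors σ
        obtain ⟨n, hn⟩ := (prod_list_swap_mem_alternatingGroup_iff_even_length hl).1 hσ
        rw [← two_mul] at hn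
        exact hind n l hl hn
      intro n
      induction' n with n ih <;> intro l hl hn
      · simp [List.length_eq_zero_iff.1 hn, one_mem]
      rw [Nat.mul_succ] at hn
      obtain ⟨a, l, rfl⟩ := l.exists_of_length_succ hn
      rw [List.length_cons, Nat.succ_inj] at hn
      obtain ⟨b, l, rfl⟩ := l.exists_of_length_succ hn
      rw [List.prod_cons, List.prod_cons, ← mul_assoc]
      rw [List.length_cons, Nat.succ_inj] at hn
      exact mul_mem
        (swap_pair_mem (hl a List.mem_cons_self) (hl b (List.mem_cons_of_mem a (List.mem_cons_self : b ∈ b :: l))))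
        (ih _ (fun g hg => hl g (List.mem_cons_of_mem _ (List.mem_cons_of_mem _ hg))) hn)
  exact hS
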